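/- Let (x_n) ⊂ [0,1], 0 ≤ β < 1, and suppose there exists s₀ > 0 such that f_β(s) := lim_{N→∞} F_{N,β}(s) exists for all s < s₀, with f_β(0) = 0 and f_β differentiable on [0, s₀). Then for every s ≥ 0, limsup_{N→∞} F_{N,β}(s) ≤ f_β'(0)·s. -/

import Mathlib

open MeasureTheory Filter
open scoped Classical

/-- Distance to the nearest integer. -/
noncomputable def nearestIntDist (x : ℝ) : ℝ := |x - round x|

/-- The weak pair correlation statistic `F_{N,β}(s)`. -/
noncomputable def pairCorr (x : ℕ → ℝ) (β : ℝ) (N : ℕ) (s : ℝ) : ℝ :=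
  (N : ℝ) ^ (β - 2) *
    (((Finset.range N ×ˢ Finset.range N).filter
      (fun p => p.1 ≠ p.2 ∧ nearestIntDist (x p.1 - x p.2) ≤ s / (N : ℝ) ^ β)).card)

open Finset

lemma nid_nonneg (z : ℝ) : 0 ≤ nearestIntDist z := abs_nonneg _

lemma nid_le_half (z : ℝ) : nearestIntDist z ≤ 1/2 := abs_sub_round z

lemma nid_le_abs_sub (z : ℝ) (n : ℤ) : nearestIntDist z ≤ |z - n| := by
  by_cases h : n = round z
  · simp [nearestIntDist, h]
  · have h1 : (1:ℝ) ≤ |(n:ℝ) - round z| := by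
      have : n - round z ≠ 0 := sub_ne_zero.mpr (by exact_mod_cast h)
      have := Int.one_le_abs this
      calc (1:ℝ) ≤ |(n - round z : ℤ)| := by exact_mod_cast this
        _ = |(n:ℝ) - round z| := by push_cast; ring_nf
    have h2 : |(n:ℝ) - round z| ≤ |z - n| + |z - round z| := by
      have := abs_sub (z - (round z : ℝ)) (z - (n : ℝ))
      have e : (z - (round z:ℝ)) - (z - n) = (n:ℝ) - round z := by ring
      rw [e] at this
      linarith [this, abs_sub_comm (z - (round z:ℝ)) (z - (n:ℝ))]
    have h3 : |z - round z| ≤ 1/2 := abs_sub_round z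
    have h4 : (1:ℝ)/2 ≤ |z - n| := by linarith
    calc nearestIntDist z ≤ 1/2 := nid_le_half z
      _ ≤ |z - n| := h4

lemma nid_le_abs (z : ℝ) : nearestIntDist z ≤ |z| := by
  simpa using nid_le_abs_sub z 0

lemma nid_add_int (z : ℝ) (n : ℤ) : nearestIntDist (z + n) = nearestIntDist z := by
  unfold nearestIntDist
  rw [round_add_intCast]
  push_cast
  ring_nf

lemma nid_lipschitz (a b : ℝ) : |nearestIntDist a - nearestIntDist b| ≤ |a - b| := by
  have key : ∀ u v : ℝ, nearestIntDist u - nearestIntDist v ≤ |u - v| := by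
    intro u v
    have h1 : nearestIntDist u ≤ |u - round v| := nid_le_abs_sub u (round v)
    have h2 : |u - (round v:ℝ)| ≤ |u - v| + |v - round v| := by
      have := abs_sub_le u v (round v : ℝ)
      simpa using this
    have h3 : nearestIntDist v = |v - round v| := rfl
    linarith
  rw [abs_sub_le_iff]
  exact ⟨key a b, by simpa [abs_sub_comm] using key b a⟩


lemma nid_nat_div (Q j : ℕ) (hQ : 0 < Q) (hj : j < Q) :
    nearestIntDist ((j:ℝ)/Q) = (min j (Q - j) : ℕ)/(Q:ℝ) := by
  have hQ' : (0:ℝ) < Q := by exact_mod_cast hQ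
  have hjQ : (j:ℝ) ≤ Q := by exact_mod_cast hj.le
  have hcast : ((min j (Q - j) : ℕ):ℝ) = min (j:ℝ) ((Q:ℝ) - j) := by
    have : ((Q - j : ℕ):ℝ) = (Q:ℝ) - j := by
      rw [Nat.cast_sub hj.le]
    push_cast [Nat.cast_min] at *
    rw [this]
  apply le_antisymm
  · rw [hcast, ← min_div_div_right hQ'.le]
    apply le_min
    · have := nid_le_abs_sub ((j:ℝ)/Q) 0
      simp only [Int.cast_zero, sub_zero] at this
      calc nearestIntDist ((j:ℝ)/Q) ≤ |(j:ℝ)/Q| := this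
        _ = (j:ℝ)/Q := abs_of_nonneg (by positivity)
    · have := nid_le_abs_sub ((j:ℝ)/Q) 1
      have e : |(j:ℝ)/Q - (1:ℤ)| = ((Q:ℝ) - j)/Q := by
        rw [abs_of_nonpos]
        · push_cast; field_simp; ring
        · push_cast
          rw [sub_nonpos, div_le_one hQ']
          exact hjQ
      rw [e] at this
      exact this
  · set n := round ((j:ℝ)/Q) with hn
    have e1 : nearestIntDist ((j:ℝ)/Q) = |((j:ℝ) - n*Q)/Q| := by
      unfold nearestIntDist
      rw [← hn]
      congr 1
      field_simp
    rw [e1, abs_div, abs_of_pos hQ', div_le_div_iff_of_pos_right hQ', hcast]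
    rcases le_or_gt n 0 with h | h
    · have h2 : (n:ℝ)*Q ≤ 0 := mul_nonpos_of_nonpos_of_nonneg (by exact_mod_cast h) hQ'.le
      have : (j:ℝ) - n*Q ≥ (j:ℝ) := by linarith
      rw [abs_of_nonneg (by linarith [Nat.cast_nonneg (α := ℝ) j] : (0:ℝ) ≤ (j:ℝ) - n*Q)]
      exact le_trans (min_le_left _ _) (by linarith)
    · have h1 : (1:ℝ) ≤ (n:ℝ) := by exact_mod_cast h
      have h2 : (Q:ℝ) ≤ n*Q := by nlinarith
      rw [abs_of_nonpos (by linarith : (j:ℝ) - n*Q ≤ 0)]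
      exact le_trans (min_le_right _ _) (by linarith)


lemma nid_int_div (Q : ℕ) [NeZero Q] (k : ℤ) :
    nearestIntDist ((k:ℝ)/Q) =
      (min (k : ZMod Q).val (Q - (k : ZMod Q).val) : ℕ)/(Q:ℝ) := by
  have hQ : 0 < Q := Nat.pos_of_ne_zero (NeZero.ne Q)
  have hQ' : (0:ℝ) < Q := by exact_mod_cast hQ
  set j := (k : ZMod Q).val with hj
  have hjQ : j < Q := ZMod.val_lt _
  have hjk : (j : ℤ) = k % Q := ZMod.val_intCast k
  set q := k / (Q:ℤ) with hq
  have hk : k = Q * q + j := by rw [hjk, hq]; exact (Int.mul_ediv_add_emod k Q).symm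
  have e : (k:ℝ)/Q = (j:ℝ)/Q + q := by
    rw [hk]; push_cast; field_simp; ring
  rw [e, nid_add_int, nid_nat_div Q j hQ hjQ]

lemma card_overlap (Q : ℕ) [NeZero Q] (L : ℕ) (h2L : 2*L ≤ Q) (k : ZMod Q) :
    ((univ : Finset (ZMod Q)).filter
        (fun v => v.val < L ∧ (v + k).val < L)).card
      = L - min k.val (Q - k.val) := by
  have hQ : 0 < Q := Nat.pos_of_ne_zero (NeZero.ne Q)
  set j := k.val with hj
  have hjQ : j < Q := ZMod.val_lt _
  -- transfer to range Q
  have hcard : ((univ : Finset (ZMod Q)).filter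
        (fun v => v.val < L ∧ (v + k).val < L)).card
      = ((range Q).filter (fun ω => ω < L ∧ (ω + j) % Q < L)).card := by
    apply Finset.card_nbij (fun v => v.val)
    · intro v hv
      simp only [Finset.mem_coe, mem_filter, mem_univ, true_and] at hv
      simp only [Finset.mem_coe, mem_filter, mem_range]
      refine ⟨ZMod.val_lt v, hv.1, ?_⟩
      have := ZMod.val_add v k
      rw [← this]; exact hv.2
    · intro a _ b _ h
      exact ZMod.val_injective Q h
    · intro ω hω
      simp only [Finset.coe_filter, Set.mem_setOf_eq, mem_range] at hω
      refine ⟨(ω : ZMod Q), ?_, ZMod.val_cast_of_lt hω.1⟩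
      simp only [Finset.coe_filter, Set.mem_setOf_eq, mem_univ, true_and]
      rw [ZMod.val_add, ZMod.val_cast_of_lt hω.1]
      exact ⟨hω.2.1, hω.2.2⟩
  rw [hcard]
  rcases lt_or_ge j L with h1 | h1
  · -- card = L - j, min = j
    have hmin : min j (Q - j) = j := by omega
    rw [hmin]
    have : (range Q).filter (fun ω => ω < L ∧ (ω + j) % Q < L) = range (L - j) := by
      ext ω
      simp only [mem_filter, mem_range]
      constructor
      · rintro ⟨h2, h3, h4⟩
        rw [Nat.mod_eq_of_lt (by omega)] at h4
        omega
      · intro h2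
        have e : (ω + j) % Q = ω + j := Nat.mod_eq_of_lt (by omega)
        exact ⟨by omega, by omega, by rw [e]; omega⟩
    rw [this, Finset.card_range]
  · rcases le_or_gt j (Q - L) with h2 | h2
    · -- empty
      have hmin : L - min j (Q - j) = 0 := by omega
      rw [hmin]
      convert Finset.card_empty
      ext ω
      simp only [mem_filter, mem_range, Finset.notMem_empty, iff_false, not_and]
      intro h3 h4
      rcases lt_or_ge (ω + j) Q with h5 | h5
      · rw [Nat.mod_eq_of_lt h5]; omega
      · have e : (ω + j) % Q = ω + j - Q := by
          rw [Nat.mod_eq_sub_mod h5, Nat.mod_eq_of_lt (by omega)]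
        rw [e]; omega
    · -- card = L - (Q - j)
      have hmin : min j (Q - j) = Q - j := by omega
      rw [hmin]
      have : (range Q).filter (fun ω => ω < L ∧ (ω + j) % Q < L)
          = Finset.Ico (Q - j) L := by
        ext ω
        simp only [mem_filter, mem_range, Finset.mem_Ico]
        constructor
        · rintro ⟨h3, h4, h5⟩
          rcases lt_or_ge (ω + j) Q with h6 | h6
          · rw [Nat.mod_eq_of_lt h6] at h5; omega
          · have e : (ω + j) % Q = ω + j - Q := by
              rw [Nat.mod_eq_sub_mod h6, Nat.mod_eq_of_lt (by omega)]
            rw [e] at h5; omega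
        · rintro ⟨h3, h4⟩
          have e : (ω + j) % Q = ω + j - Q := by
            rw [Nat.mod_eq_sub_mod (by omega), Nat.mod_eq_of_lt (by omega)]
          refine ⟨by omega, by omega, by rw [e]; omega⟩
      rw [this, Nat.card_Ico]


section disc
variable (Q : ℕ) [NeZero Q] (L : ℕ)

lemma overlap₂ (h2L : 2*L ≤ Q) (b₁ b₂ : ZMod Q) :
    ((univ : Finset (ZMod Q)).filter
        (fun v => (v - b₁).val < L ∧ (v - b₂).val < L)).card
      = L - min (b₁ - b₂).val (Q - (b₁ - b₂).val) := by
  rw [← card_overlap Q L h2L (b₁ - b₂)]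
  apply Finset.card_bij (fun v _ => v - b₁)
  · intro w hw
    simp only [mem_filter, mem_univ, true_and] at hw ⊢
    refine ⟨hw.1, ?_⟩
    have e : w - b₁ + (b₁ - b₂) = w - b₂ := by ring
    rw [e]; exact hw.2
  · intro a _ b _ h
    exact sub_left_injective h
  · intro w hw
    simp only [mem_filter, mem_univ, true_and] at hw
    refine ⟨w + b₁, ?_, by ring⟩
    simp only [mem_filter, mem_univ, true_and]
    have e1 : w + b₁ - b₁ = w := by ring
    have e2 : w + b₁ - b₂ = w + (b₁ - b₂) := by ring
    rw [e1, e2]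
    exact hw

lemma discretePD (h2L : 2*L ≤ Q) (N : ℕ) (a : ℕ → ℤ) (c : ℤ) :
    ∑ p ∈ range N ×ˢ range N,
        (((L - min ((a p.1 - a p.2 - c : ℤ) : ZMod Q).val
            (Q - ((a p.1 - a p.2 - c : ℤ) : ZMod Q).val) : ℕ)) : ℝ)
      ≤ ∑ p ∈ range N ×ˢ range N,
        (((L - min ((a p.1 - a p.2 : ℤ) : ZMod Q).val
            (Q - ((a p.1 - a p.2 : ℤ) : ZMod Q).val) : ℕ)) : ℝ) := by
  classical
  set g : ZMod Q → ℝ := fun v =>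
    ∑ i ∈ range N, (if (v - (a i : ZMod Q)).val < L then (1:ℝ) else 0) with hg
  have key : ∀ c' : ℤ, ∑ p ∈ range N ×ˢ range N,
        (((L - min ((a p.1 - a p.2 - c' : ℤ) : ZMod Q).val
            (Q - ((a p.1 - a p.2 - c' : ℤ) : ZMod Q).val) : ℕ)) : ℝ)
      = ∑ v : ZMod Q, g v * g (v - (c' : ZMod Q)) := by
    intro c'
    have step1 : ∀ p : ℕ × ℕ,
        (((L - min ((a p.1 - a p.2 - c' : ℤ) : ZMod Q).val
            (Q - ((a p.1 - a p.2 - c' : ℤ) : ZMod Q).val) : ℕ)) : ℝ)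
        = ∑ v : ZMod Q, (if (v - (a p.1 : ZMod Q)).val < L then (1:ℝ) else 0)
            * (if ((v - (c' : ZMod Q)) - (a p.2 : ZMod Q)).val < L then (1:ℝ) else 0) := by
      intro p
      have e1 : ((a p.1 - a p.2 - c' : ℤ) : ZMod Q)
          = (a p.1 : ZMod Q) - ((a p.2 : ZMod Q) + (c' : ZMod Q)) := by
        push_cast; ring
      rw [e1, ← overlap₂ Q L h2L ((a p.1 : ZMod Q)) ((a p.2 : ZMod Q) + (c' : ZMod Q))]
      rw [Finset.card_filter]
      push_cast
      apply Finset.sum_congr rfl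
      intro v _
      have e2 : v - ((a p.2 : ZMod Q) + (c' : ZMod Q)) = (v - c') - (a p.2 : ZMod Q) := by
        ring
      rw [e2]
      by_cases h1 : (v - (a p.1 : ZMod Q)).val < L <;>
        by_cases h2 : ((v - (c' : ZMod Q)) - (a p.2 : ZMod Q)).val < L <;>
        simp [h1, h2]
    calc ∑ p ∈ range N ×ˢ range N, _ = ∑ p ∈ range N ×ˢ range N,
          ∑ v : ZMod Q, (if (v - (a p.1 : ZMod Q)).val < L then (1:ℝ) else 0)
            * (if ((v - (c' : ZMod Q)) - (a p.2 : ZMod Q)).val < L then (1:ℝ) else 0) :=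
        Finset.sum_congr rfl (fun p _ => step1 p)
      _ = ∑ v : ZMod Q, ∑ p ∈ range N ×ˢ range N,
            (if (v - (a p.1 : ZMod Q)).val < L then (1:ℝ) else 0)
            * (if ((v - (c' : ZMod Q)) - (a p.2 : ZMod Q)).val < L then (1:ℝ) else 0) :=
        Finset.sum_comm
      _ = ∑ v : ZMod Q, g v * g (v - (c' : ZMod Q)) := by
        apply Finset.sum_congr rfl
        intro v _
        rw [hg, Finset.sum_mul_sum]
        rw [Finset.sum_product]
  rw [key c]
  have e0 : ∑ p ∈ range N ×ˢ range N,
        (((L - min ((a p.1 - a p.2 : ℤ) : ZMod Q).val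
            (Q - ((a p.1 - a p.2 : ℤ) : ZMod Q).val) : ℕ)) : ℝ)
      = ∑ v : ZMod Q, g v * g v := by
    have := key 0
    simpa using this
  rw [e0]
  have sq : ∑ v : ZMod Q, g (v - (c : ZMod Q)) * g (v - (c : ZMod Q))
      = ∑ v : ZMod Q, g v * g v := by
    exact Equiv.sum_comp (Equiv.subRight (c : ZMod Q)) (fun v => g v * g v)
  have : ∑ v : ZMod Q, g v * g (v - (c : ZMod Q))
      ≤ (∑ v : ZMod Q, g v * g v) / 2 + (∑ v : ZMod Q, g (v - (c : ZMod Q)) * g (v - (c : ZMod Q))) / 2 := by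
    rw [Finset.sum_div, Finset.sum_div, ← Finset.sum_add_distrib]
    apply Finset.sum_le_sum
    intro v _
    nlinarith [sq_nonneg (g v - g (v - (c : ZMod Q)))]
  rw [sq] at this
  linarith
end disc


lemma tent_eq (Q : ℕ) [NeZero Q] (L : ℕ) (k : ℤ) :
    max ((L:ℝ)/Q - nearestIntDist ((k:ℝ)/Q)) 0
      = ((L - min ((k : ZMod Q)).val (Q - ((k : ZMod Q)).val) : ℕ) : ℝ)/(Q:ℝ) := by
  have hQ : 0 < Q := Nat.pos_of_ne_zero (NeZero.ne Q)
  have hQ' : (0:ℝ) < Q := by exact_mod_cast hQ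
  rw [nid_int_div]
  set m := min ((k : ZMod Q)).val (Q - ((k : ZMod Q)).val) with hm
  rcases le_or_gt m L with h | h
  · rw [Nat.cast_sub h, div_sub_div_same]
    apply max_eq_left
    apply div_nonneg _ hQ'.le
    have : (m:ℝ) ≤ L := by exact_mod_cast h
    linarith
  · have : L - m = 0 := by omega
    rw [this]
    simp only [Nat.cast_zero, zero_div]
    apply max_eq_right
    have : (L:ℝ) < m := by exact_mod_cast h
    have := hQ'
    rw [div_sub_div_same]
    apply div_nonpos_of_nonpos_of_nonneg _ hQ'.le
    linarith

lemma realPD (x : ℕ → ℝ) (N : ℕ) (t σ : ℝ) (hσ : 0 < σ) (hσ4 : σ ≤ 1/4) :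
    ∑ p ∈ range N ×ˢ range N, max (σ - nearestIntDist (x p.1 - x p.2 - t)) 0
      ≤ ∑ p ∈ range N ×ˢ range N, max (σ - nearestIntDist (x p.1 - x p.2)) 0 := by
  apply le_of_forall_pos_le_add
  intro ε hε
  obtain ⟨Q, hQbig⟩ := exists_nat_gt (max 4 (6*(N:ℝ)^2/ε))
  have hQ4 : (4:ℝ) < Q := lt_of_le_of_lt (le_max_left _ _) hQbig
  have hQN : 6*(N:ℝ)^2/ε < Q := lt_of_le_of_lt (le_max_right _ _) hQbig
  have hQpos : 0 < Q := by exact_mod_cast lt_trans (by norm_num : (0:ℝ) < 4) hQ4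
  haveI : NeZero Q := ⟨by omega⟩
  have hQ' : (0:ℝ) < Q := by exact_mod_cast hQpos
  set L : ℕ := ⌈(Q:ℝ)*σ⌉₊ with hL
  have hL1 : (Q:ℝ)*σ ≤ L := Nat.le_ceil _
  have hL2 : (L:ℝ) < (Q:ℝ)*σ + 1 := Nat.ceil_lt_add_one (by positivity)
  have h2L : 2*L ≤ Q := by
    have : 2*(L:ℝ) ≤ Q := by nlinarith
    exact_mod_cast this
  set a : ℕ → ℤ := fun i => round ((Q:ℝ) * x i) with ha
  set c : ℤ := round ((Q:ℝ) * t) with hc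
  have hxa : ∀ i, |x i - (a i : ℝ)/Q| ≤ 1/(2*Q) := by
    intro i
    have := abs_sub_round ((Q:ℝ) * x i)
    have e : x i - (a i : ℝ)/Q = ((Q:ℝ)*x i - a i)/Q := by field_simp
    rw [e, abs_div, abs_of_pos hQ']
    rw [div_le_div_iff₀ hQ' (by positivity)]
    calc |(Q:ℝ)*x i - a i| * (2*Q) ≤ (1/2) * (2*Q) := by
          apply mul_le_mul_of_nonneg_right this (by positivity)
      _ = 1 * Q := by ring
  have htc : |t - (c : ℝ)/Q| ≤ 1/(2*Q) := by
    have := abs_sub_round ((Q:ℝ) * t)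
    have e : t - (c : ℝ)/Q = ((Q:ℝ)*t - c)/Q := by field_simp
    rw [e, abs_div, abs_of_pos hQ']
    rw [div_le_div_iff₀ hQ' (by positivity)]
    calc |(Q:ℝ)*t - c| * (2*Q) ≤ (1/2) * (2*Q) := by
          apply mul_le_mul_of_nonneg_right this (by positivity)
      _ = 1 * Q := by ring
  have hσL : |σ - (L:ℝ)/Q| ≤ 1/Q := by
    have d1 : σ ≤ (L:ℝ)/Q := by rw [le_div_iff₀ hQ']; linarith
    have d2 : (L:ℝ)/Q < σ + 1/Q := by rw [div_lt_iff₀ hQ']; field_simp; nlinarith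
    rw [abs_le]
    constructor <;> [linarith; linarith]
  set P := range N ×ˢ range N with hP
  have cardP : (P.card : ℝ) = (N:ℝ)^2 := by
    rw [hP, Finset.card_product, Finset.card_range]
    push_cast; ring
  -- generic comparison of real tent and rational tent
  have cmp : ∀ u v : ℝ, |u - v| ≤ 3/(2*Q) →
      ∀ e1 e2 : ℝ, |e1 - e2| ≤ 1/Q →
      max (e1 - nearestIntDist u) 0 ≤ max (e2 - nearestIntDist v) 0 + 3/Q := by
    intro u v huv e1 e2 he
    have h1 := abs_max_sub_max_le_abs (e1 - nearestIntDist u) (e2 - nearestIntDist v) 0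
    have h2 := nid_lipschitz v u
    have h3 : |(e1 - nearestIntDist u) - (e2 - nearestIntDist v)|
        ≤ |e1 - e2| + |nearestIntDist v - nearestIntDist u| := by
      have e : (e1 - nearestIntDist u) - (e2 - nearestIntDist v)
          = (e1 - e2) + (nearestIntDist v - nearestIntDist u) := by ring
      rw [e]
      exact abs_add_le _ _
    have h4 : |nearestIntDist v - nearestIntDist u| ≤ |v - u| := nid_lipschitz v u
    have h5 : |v - u| ≤ 3/(2*Q) := by rw [abs_sub_comm]; exact huv
    have h6 : max (e1 - nearestIntDist u) 0 - max (e2 - nearestIntDist v) 0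
        ≤ |(e1 - nearestIntDist u) - (e2 - nearestIntDist v)| := by
      calc max (e1 - nearestIntDist u) 0 - max (e2 - nearestIntDist v) 0
          ≤ |max (e1 - nearestIntDist u) 0 - max (e2 - nearestIntDist v) 0| := le_abs_self _
        _ ≤ _ := h1
    have hQ4' : (1:ℝ)/Q + 3/(2*Q) ≤ 3/Q := by
      rw [div_add_div _ _ (ne_of_gt hQ') (by positivity : (2:ℝ)*Q ≠ 0)]
      rw [div_le_div_iff₀ (by positivity) hQ']
      ring_nf; nlinarith
    linarith
  -- pair errors
  have err1 : ∀ p : ℕ × ℕ, |(x p.1 - x p.2 - t) - ((a p.1 - a p.2 - c : ℤ):ℝ)/Q| ≤ 3/(2*Q) := by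
    intro p
    have e : ((a p.1 - a p.2 - c : ℤ):ℝ)/Q = (a p.1 : ℝ)/Q - (a p.2:ℝ)/Q - (c:ℝ)/Q := by
      push_cast; ring
    rw [e]
    have h1 := hxa p.1
    have h2 := hxa p.2
    have h3 := htc
    calc |(x p.1 - x p.2 - t) - ((a p.1 : ℝ)/Q - (a p.2:ℝ)/Q - (c:ℝ)/Q)|
        = |(x p.1 - (a p.1:ℝ)/Q) - (x p.2 - (a p.2:ℝ)/Q) - (t - (c:ℝ)/Q)| := by ring_nf
      _ ≤ |(x p.1 - (a p.1:ℝ)/Q) - (x p.2 - (a p.2:ℝ)/Q)| + |t - (c:ℝ)/Q| := abs_sub _ _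
      _ ≤ (|x p.1 - (a p.1:ℝ)/Q| + |x p.2 - (a p.2:ℝ)/Q|) + |t - (c:ℝ)/Q| := by
          have := abs_sub (x p.1 - (a p.1:ℝ)/Q) (x p.2 - (a p.2:ℝ)/Q)
          linarith
      _ ≤ 1/(2*Q) + 1/(2*Q) + 1/(2*Q) := by linarith
      _ = 3/(2*Q) := by ring
  have err0 : ∀ p : ℕ × ℕ, |(x p.1 - x p.2) - ((a p.1 - a p.2 : ℤ):ℝ)/Q| ≤ 3/(2*Q) := by
    intro p
    have e : ((a p.1 - a p.2 : ℤ):ℝ)/Q = (a p.1 : ℝ)/Q - (a p.2:ℝ)/Q := by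
      push_cast; ring
    rw [e]
    have h1 := hxa p.1
    have h2 := hxa p.2
    calc |(x p.1 - x p.2) - ((a p.1 : ℝ)/Q - (a p.2:ℝ)/Q)|
        = |(x p.1 - (a p.1:ℝ)/Q) - (x p.2 - (a p.2:ℝ)/Q)| := by ring_nf
      _ ≤ |x p.1 - (a p.1:ℝ)/Q| + |x p.2 - (a p.2:ℝ)/Q| := abs_sub _ _
      _ ≤ 1/(2*Q) + 1/(2*Q) := by linarith
      _ ≤ 3/(2*Q) := by rw [← add_div]; gcongr <;> norm_num
  have hσL' : |(L:ℝ)/Q - σ| ≤ 1/Q := by rw [abs_sub_comm]; exact hσL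
  have step1 : ∑ p ∈ P, max (σ - nearestIntDist (x p.1 - x p.2 - t)) 0
      ≤ (∑ p ∈ P, max ((L:ℝ)/Q - nearestIntDist (((a p.1 - a p.2 - c : ℤ):ℝ)/Q)) 0)
        + (N:ℝ)^2 * (3/Q) := by
    calc ∑ p ∈ P, max (σ - nearestIntDist (x p.1 - x p.2 - t)) 0
        ≤ ∑ p ∈ P, (max ((L:ℝ)/Q - nearestIntDist (((a p.1 - a p.2 - c : ℤ):ℝ)/Q)) 0 + 3/Q) :=
          Finset.sum_le_sum (fun p _ =>
            cmp (x p.1 - x p.2 - t) (((a p.1 - a p.2 - c : ℤ):ℝ)/Q) (err1 p) σ ((L:ℝ)/Q) hσL)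
      _ = _ + (N:ℝ)^2 * (3/Q) := by
          rw [Finset.sum_add_distrib, Finset.sum_const, nsmul_eq_mul, cardP]
  have step3 : ∑ p ∈ P, max ((L:ℝ)/Q - nearestIntDist (((a p.1 - a p.2 : ℤ):ℝ)/Q)) 0
      ≤ (∑ p ∈ P, max (σ - nearestIntDist (x p.1 - x p.2)) 0) + (N:ℝ)^2 * (3/Q) := by
    calc ∑ p ∈ P, max ((L:ℝ)/Q - nearestIntDist (((a p.1 - a p.2 : ℤ):ℝ)/Q)) 0
        ≤ ∑ p ∈ P, (max (σ - nearestIntDist (x p.1 - x p.2)) 0 + 3/Q) :=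
          Finset.sum_le_sum (fun p _ =>
            cmp (((a p.1 - a p.2 : ℤ):ℝ)/Q) (x p.1 - x p.2)
              (by rw [abs_sub_comm]; exact err0 p) ((L:ℝ)/Q) σ hσL')
      _ = _ + (N:ℝ)^2 * (3/Q) := by
          rw [Finset.sum_add_distrib, Finset.sum_const, nsmul_eq_mul, cardP]
  have step2 : ∑ p ∈ P, max ((L:ℝ)/Q - nearestIntDist (((a p.1 - a p.2 - c : ℤ):ℝ)/Q)) 0
      ≤ ∑ p ∈ P, max ((L:ℝ)/Q - nearestIntDist (((a p.1 - a p.2 : ℤ):ℝ)/Q)) 0 := by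
    calc ∑ p ∈ P, max ((L:ℝ)/Q - nearestIntDist (((a p.1 - a p.2 - c : ℤ):ℝ)/Q)) 0
        = ∑ p ∈ P, (((L - min ((a p.1 - a p.2 - c : ℤ) : ZMod Q).val
            (Q - ((a p.1 - a p.2 - c : ℤ) : ZMod Q).val) : ℕ)) : ℝ)/(Q:ℝ) :=
          Finset.sum_congr rfl (fun p _ => tent_eq Q L _)
      _ = (∑ p ∈ P, (((L - min ((a p.1 - a p.2 - c : ℤ) : ZMod Q).val
            (Q - ((a p.1 - a p.2 - c : ℤ) : ZMod Q).val) : ℕ)) : ℝ))/(Q:ℝ) := by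
          rw [Finset.sum_div]
      _ ≤ (∑ p ∈ P, (((L - min ((a p.1 - a p.2 : ℤ) : ZMod Q).val
            (Q - ((a p.1 - a p.2 : ℤ) : ZMod Q).val) : ℕ)) : ℝ))/(Q:ℝ) := by
          have hd := discretePD Q L h2L N a c
          rw [← hP] at hd
          gcongr
      _ = ∑ p ∈ P, max ((L:ℝ)/Q - nearestIntDist (((a p.1 - a p.2 : ℤ):ℝ)/Q)) 0 := by
          rw [Finset.sum_div]
          exact Finset.sum_congr rfl (fun p _ => (tent_eq Q L _).symm)
  have hfin : 6*(N:ℝ)^2/Q ≤ ε := by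
    rw [div_le_iff₀ hQ']
    rw [div_lt_iff₀ hε] at hQN
    nlinarith
  calc ∑ p ∈ P, max (σ - nearestIntDist (x p.1 - x p.2 - t)) 0
      ≤ _ + (N:ℝ)^2 * (3/Q) := step1
    _ ≤ (∑ p ∈ P, max ((L:ℝ)/Q - nearestIntDist (((a p.1 - a p.2 : ℤ):ℝ)/Q)) 0)
        + (N:ℝ)^2 * (3/Q) := by linarith [step2]
    _ ≤ (∑ p ∈ P, max (σ - nearestIntDist (x p.1 - x p.2)) 0)
        + (N:ℝ)^2 * (3/Q) + (N:ℝ)^2 * (3/Q) := by linarith [step3]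
    _ ≤ (∑ p ∈ P, max (σ - nearestIntDist (x p.1 - x p.2)) 0) + ε := by
        have : (N:ℝ)^2*(3/Q) + (N:ℝ)^2*(3/Q) = 6*(N:ℝ)^2/Q := by ring
        linarith


lemma cover (σ : ℝ) (hσ : 0 < σ) (K : ℕ) (z : ℝ) (hz : nearestIntDist z ≤ K*σ) :
    σ ≤ ∑ r ∈ Finset.Icc (-(K:ℤ)) (K+1), max (σ - nearestIntDist (z - r*σ)) 0 := by
  set w := z - round z with hwdef
  have hw : |w| = nearestIntDist z := rfl
  set r₀ := ⌊w/σ⌋ with hr₀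
  have hwK : |w| ≤ K*σ := by rw [hw]; exact hz
  have h1 : -(K:ℤ) ≤ r₀ := by
    rw [hr₀, Int.le_floor]
    rw [le_div_iff₀ hσ]
    push_cast
    have := abs_le.mp hwK
    nlinarith [this.1]
  have h2 : r₀ ≤ K := by
    have : w/σ ≤ (K:ℝ) := by
      rw [div_le_iff₀ hσ]
      have := abs_le.mp hwK
      linarith [this.2]
    calc r₀ ≤ ⌊(K:ℝ)⌋ := Int.floor_le_floor this
      _ = K := by rw [Int.floor_natCast]
  have hf1 : (r₀:ℝ) ≤ w/σ := Int.floor_le _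
  have hf2 : w/σ < r₀ + 1 := Int.lt_floor_add_one _
  have hw0 : (r₀:ℝ)*σ ≤ w := by rw [← le_div_iff₀ hσ]; exact hf1
  have hw1 : w < ((r₀:ℝ)+1)*σ := by rw [← div_lt_iff₀ hσ]; exact_mod_cast hf2
  have nidle : ∀ r : ℤ, nearestIntDist (z - r*σ) ≤ |w - r*σ| := by
    intro r
    have e : z - r*σ = (w - r*σ) + (round z : ℤ) := by rw [hwdef]; ring
    rw [e, nid_add_int]
    exact nid_le_abs _
  have t1 : σ - (w - r₀*σ) ≤ max (σ - nearestIntDist (z - r₀*σ)) 0 := by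
    have := nidle r₀
    have e : |w - r₀*σ| = w - r₀*σ := abs_of_nonneg (by linarith)
    calc σ - (w - r₀*σ) = σ - |w - r₀*σ| := by rw [e]
      _ ≤ σ - nearestIntDist (z - r₀*σ) := by linarith
      _ ≤ max (σ - nearestIntDist (z - r₀*σ)) 0 := le_max_left _ _
  have t2 : σ - (((r₀:ℝ)+1)*σ - w) ≤ max (σ - nearestIntDist (z - (r₀+1)*σ)) 0 := by
    have := nidle (r₀+1)
    have e : |w - ((r₀:ℝ)+1)*σ| = ((r₀:ℝ)+1)*σ - w := by
      rw [abs_of_nonpos (by linarith)]; ring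
    push_cast at this ⊢
    calc σ - (((r₀:ℝ)+1)*σ - w) = σ - |w - ((r₀:ℝ)+1)*σ| := by rw [e]
      _ ≤ σ - nearestIntDist (z - ((r₀:ℝ)+1)*σ) := by linarith
      _ ≤ _ := le_max_left _ _
  have hsub : ({r₀, r₀+1} : Finset ℤ) ⊆ Finset.Icc (-(K:ℤ)) (K+1) := by
    intro r hr
    simp only [Finset.mem_insert, Finset.mem_singleton] at hr
    rw [Finset.mem_Icc]
    rcases hr with h | h <;> omega
  have hpair : ∑ r ∈ ({r₀, r₀+1} : Finset ℤ), max (σ - nearestIntDist (z - r*σ)) 0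
      ≤ ∑ r ∈ Finset.Icc (-(K:ℤ)) (K+1), max (σ - nearestIntDist (z - r*σ)) 0 := by
    apply Finset.sum_le_sum_of_subset_of_nonneg hsub
    intro r _ _
    exact le_max_right _ _
  have hps : ∑ r ∈ ({r₀, r₀+1} : Finset ℤ), max (σ - nearestIntDist (z - r*σ)) 0
      = max (σ - nearestIntDist (z - r₀*σ)) 0 + max (σ - nearestIntDist (z - (r₀+1)*σ)) 0 := by
    rw [Finset.sum_pair (by omega : r₀ ≠ r₀ + 1)]
    push_cast
    ring_nf
  have : σ ≤ max (σ - nearestIntDist (z - r₀*σ)) 0 + max (σ - nearestIntDist (z - (r₀+1)*σ)) 0 := by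
    push_cast at t1 t2 ⊢
    nlinarith [t1, t2]
  calc σ ≤ _ := this
    _ = _ := hps.symm
    _ ≤ _ := hpair

lemma layers (σ : ℝ) (hσ : 0 < σ) (M : ℕ) (hM : 1 ≤ M) (z : ℝ) :
    max (σ - nearestIntDist z) 0
      ≤ (σ/M) * ∑ m ∈ Finset.Icc 1 M, (if nearestIntDist z ≤ m*σ/M then (1:ℝ) else 0) := by
  have hM' : (0:ℝ) < M := by exact_mod_cast hM
  set θ := nearestIntDist z with hθ
  have hθ0 : 0 ≤ θ := nid_nonneg z
  rcases le_or_gt θ σ with h | h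
  · set m₁ := max 1 ⌈(M:ℝ)*θ/σ⌉₊ with hm₁
    have hm₁M : m₁ ≤ M := by
      rw [hm₁, max_le_iff]
      refine ⟨hM, ?_⟩
      rw [Nat.ceil_le, div_le_iff₀ hσ]
      nlinarith
    have hsub : Finset.Icc m₁ M ⊆ (Finset.Icc 1 M).filter (fun m : ℕ => θ ≤ (m:ℝ)*σ/M) := by
      intro m hm
      rw [Finset.mem_Icc] at hm
      rw [Finset.mem_filter, Finset.mem_Icc]
      refine ⟨⟨le_trans (le_max_left _ _) hm.1, hm.2⟩, ?_⟩
      rw [le_div_iff₀ hM']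
      have hceil : (M:ℝ)*θ/σ ≤ (⌈(M:ℝ)*θ/σ⌉₊ : ℝ) := Nat.le_ceil _
      have : (⌈(M:ℝ)*θ/σ⌉₊ : ℝ) ≤ m := by
        exact_mod_cast le_trans (le_max_right 1 _) hm.1
      rw [div_le_iff₀ hσ] at hceil
      nlinarith
    have hcard : (M + 1 - m₁ : ℕ) ≤ ((Finset.Icc 1 M).filter (fun m : ℕ => θ ≤ (m:ℝ)*σ/M)).card := by
      calc (M + 1 - m₁ : ℕ) = (Finset.Icc m₁ M).card := by rw [Nat.card_Icc]
        _ ≤ _ := Finset.card_le_card hsub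
    have hm₁R : (m₁:ℝ) ≤ (M:ℝ)*θ/σ + 1 := by
      rw [hm₁]
      rcases max_cases 1 ⌈(M:ℝ)*θ/σ⌉₊ with ⟨he, _⟩ | ⟨he, _⟩ <;> rw [he]
      · have : (0:ℝ) ≤ (M:ℝ)*θ/σ := by positivity
        push_cast; linarith
      · exact le_of_lt (Nat.ceil_lt_add_one (by positivity))
    rw [max_eq_left (by linarith)]
    have hsum : ∑ m ∈ Finset.Icc 1 M, (if nearestIntDist z ≤ (m:ℝ)*σ/M then (1:ℝ) else 0)
        = (((Finset.Icc 1 M).filter (fun m : ℕ => θ ≤ (m:ℝ)*σ/M)).card : ℝ) := by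
      rw [← hθ, Finset.sum_boole]
    rw [hsum]
    have hc1 : ((M + 1 - m₁ : ℕ):ℝ) ≤ (((Finset.Icc 1 M).filter (fun m : ℕ => θ ≤ (m:ℝ)*σ/M)).card : ℝ) := by
      exact_mod_cast hcard
    have hc2 : ((M + 1 - m₁ : ℕ):ℝ) = (M:ℝ) + 1 - (m₁:ℝ) := by
      rw [Nat.cast_sub (by omega)]
      push_cast; ring
    have e1 : (σ/M)*((M:ℝ) - (M:ℝ)*θ/σ) = σ - θ := by field_simp
    have hmono : (σ/M)*((M:ℝ) - (M:ℝ)*θ/σ) ≤ (σ/M)*((M:ℝ) + 1 - (m₁:ℝ)) := by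
      apply mul_le_mul_of_nonneg_left _ (by positivity)
      linarith
    calc σ - θ = (σ/M)*((M:ℝ) - (M:ℝ)*θ/σ) := e1.symm
      _ ≤ (σ/M)*((M:ℝ) + 1 - (m₁:ℝ)) := hmono
      _ = (σ/M)*((M + 1 - m₁ : ℕ):ℝ) := by rw [hc2]
      _ ≤ _ := by
          apply mul_le_mul_of_nonneg_left hc1 (by positivity)
  · rw [max_eq_right (by linarith)]
    apply mul_nonneg (by positivity)
    apply Finset.sum_nonneg
    intro m _
    split <;> norm_num


section master
open scoped Classical

lemma master (x : ℕ → ℝ) (β : ℝ) (hβ0 : 0 ≤ β) (N K M : ℕ) (s : ℝ)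
    (hN : 1 ≤ N) (hK : 1 ≤ K) (hM : 1 ≤ M) (hs : 0 < s) (hsK : s/K ≤ 1/4) :
    pairCorr x β N s ≤ (2*(K:ℝ)+2) *
      ((1/(M:ℝ)) * ∑ m ∈ Finset.Icc 1 M, pairCorr x β N ((m:ℝ)*s/((K:ℝ)*M))
        + (N:ℝ)^(β-1:ℝ)) := by
  have hN' : (1:ℝ) ≤ (N:ℝ) := by exact_mod_cast hN
  have hNpos : (0:ℝ) < N := by linarith
  have hK' : (0:ℝ) < K := by exact_mod_cast hK
  have hM' : (0:ℝ) < M := by exact_mod_cast hM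
  set Nb : ℝ := (N:ℝ)^β with hNb
  have hNb1 : 1 ≤ Nb := Real.one_le_rpow hN' hβ0
  have hNbpos : 0 < Nb := by linarith
  set σ : ℝ := s/(K*Nb) with hσdef
  have hσpos : 0 < σ := by positivity
  have hσ4 : σ ≤ 1/4 := by
    have h1 : σ ≤ s/K := by
      rw [hσdef]
      apply div_le_div_of_nonneg_left hs.le hK'
      nlinarith
    linarith
  have hδ : (K:ℝ)*σ = s/Nb := by
    rw [hσdef]; field_simp
  set P := range N ×ˢ range N with hP
  set tent : ℝ → ℝ := fun z => max (σ - nearestIntDist z) 0 with htent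
  set cnt : ℝ → ℕ := fun ρ => ((P.filter
      (fun p => p.1 ≠ p.2 ∧ nearestIntDist (x p.1 - x p.2) ≤ ρ)).card) with hcnt
  -- step 1 : covering
  have step1 : σ * (cnt (s/Nb) : ℝ)
      ≤ ∑ r ∈ Finset.Icc (-(K:ℤ)) (K+1), ∑ p ∈ P, tent (x p.1 - x p.2 - r*σ) := by
    rw [mul_comm]
    calc (cnt (s/Nb) : ℝ) * σ
        = ∑ _p ∈ P.filter (fun p => p.1 ≠ p.2 ∧ nearestIntDist (x p.1 - x p.2) ≤ s/Nb), σ := by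
          rw [Finset.sum_const, nsmul_eq_mul]
      _ ≤ ∑ p ∈ P.filter (fun p => p.1 ≠ p.2 ∧ nearestIntDist (x p.1 - x p.2) ≤ s/Nb),
            ∑ r ∈ Finset.Icc (-(K:ℤ)) (K+1), tent (x p.1 - x p.2 - r*σ) := by
          apply Finset.sum_le_sum
          intro p hp
          rw [Finset.mem_filter] at hp
          apply cover σ hσpos K _
          rw [hδ]
          exact hp.2.2
      _ ≤ ∑ p ∈ P, ∑ r ∈ Finset.Icc (-(K:ℤ)) (K+1), tent (x p.1 - x p.2 - r*σ) := by
          apply Finset.sum_le_sum_of_subset_of_nonneg (Finset.filter_subset _ _)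
          intro p _ _
          apply Finset.sum_nonneg
          intro r _
          exact le_max_right _ _
      _ = ∑ r ∈ Finset.Icc (-(K:ℤ)) (K+1), ∑ p ∈ P, tent (x p.1 - x p.2 - r*σ) :=
          Finset.sum_comm
  -- step 2 : positive definiteness
  have step2 : ∑ r ∈ Finset.Icc (-(K:ℤ)) (K+1), ∑ p ∈ P, tent (x p.1 - x p.2 - r*σ)
      ≤ (2*(K:ℝ)+2) * ∑ p ∈ P, tent (x p.1 - x p.2) := by
    have hcard : (Finset.Icc (-(K:ℤ)) (K+1)).card = 2*K+2 := by
      rw [Int.card_Icc]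
      omega
    calc ∑ r ∈ Finset.Icc (-(K:ℤ)) (K+1), ∑ p ∈ P, tent (x p.1 - x p.2 - r*σ)
        ≤ ∑ _r ∈ Finset.Icc (-(K:ℤ)) (K+1), ∑ p ∈ P, tent (x p.1 - x p.2) := by
          apply Finset.sum_le_sum
          intro r _
          exact realPD x N ((r:ℝ)*σ) σ hσpos hσ4
      _ = (2*(K:ℝ)+2) * ∑ p ∈ P, tent (x p.1 - x p.2) := by
          rw [Finset.sum_const, hcard, nsmul_eq_mul]
          push_cast
          ring
  -- step 3 : layers
  have step3 : ∑ p ∈ P, tent (x p.1 - x p.2)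
      ≤ (σ/M) * ∑ m ∈ Finset.Icc 1 M, (cnt ((m:ℝ)*σ/M) : ℝ) + (N:ℝ)*σ := by
    rw [← Finset.sum_filter_add_sum_filter_not P (fun p => p.1 ≠ p.2)]
    have diag : ∑ p ∈ P.filter (fun p => ¬ p.1 ≠ p.2), tent (x p.1 - x p.2) ≤ (N:ℝ)*σ := by
      have hb : ∀ p : ℕ × ℕ, tent (x p.1 - x p.2) ≤ σ := by
        intro p
        apply max_le _ hσpos.le
        linarith [nid_nonneg (x p.1 - x p.2)]
      calc ∑ p ∈ P.filter (fun p => ¬ p.1 ≠ p.2), tent (x p.1 - x p.2)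
          ≤ ∑ _p ∈ P.filter (fun p => ¬ p.1 ≠ p.2), σ :=
            Finset.sum_le_sum (fun p _ => hb p)
        _ = ((P.filter (fun p => ¬ p.1 ≠ p.2)).card : ℝ) * σ := by
            rw [Finset.sum_const, nsmul_eq_mul]
        _ ≤ (N:ℝ)*σ := by
            apply mul_le_mul_of_nonneg_right _ hσpos.le
            have : (P.filter (fun p => ¬ p.1 ≠ p.2)).card ≤ N := by
              calc (P.filter (fun p => ¬ p.1 ≠ p.2)).card ≤ (range N).card := by
                    apply Finset.card_le_card_of_injOn (fun p : ℕ × ℕ => p.1)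
                    · intro p hp
                      rw [Finset.mem_coe, Finset.mem_filter, hP, Finset.mem_product] at hp
                      exact hp.1.1
                    · intro p hp q hq hpq
                      simp only [Finset.coe_filter, Set.mem_setOf_eq, not_not, hP,
                        Finset.mem_product] at hp hq
                      exact Prod.ext hpq (by rw [← hp.2, ← hq.2]; exact hpq)
                _ = N := Finset.card_range N
            exact_mod_cast this
    have offd : ∑ p ∈ P.filter (fun p => p.1 ≠ p.2), tent (x p.1 - x p.2)
        ≤ (σ/M) * ∑ m ∈ Finset.Icc 1 M, (cnt ((m:ℝ)*σ/M) : ℝ) := by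
      calc ∑ p ∈ P.filter (fun p => p.1 ≠ p.2), tent (x p.1 - x p.2)
          ≤ ∑ p ∈ P.filter (fun p => p.1 ≠ p.2), (σ/M) *
              ∑ m ∈ Finset.Icc 1 M,
                (if nearestIntDist (x p.1 - x p.2) ≤ (m:ℝ)*σ/M then (1:ℝ) else 0) :=
            Finset.sum_le_sum (fun p _ => layers σ hσpos M hM _)
        _ = (σ/M) * ∑ m ∈ Finset.Icc 1 M, ∑ p ∈ P.filter (fun p => p.1 ≠ p.2),
                (if nearestIntDist (x p.1 - x p.2) ≤ (m:ℝ)*σ/M then (1:ℝ) else 0) := by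
            rw [← Finset.mul_sum, Finset.sum_comm]
        _ = (σ/M) * ∑ m ∈ Finset.Icc 1 M, (cnt ((m:ℝ)*σ/M) : ℝ) := by
            congr 1
            apply Finset.sum_congr rfl
            intro m _
            rw [Finset.sum_boole]
            congr 1
            rw [hcnt, Finset.filter_filter]
    linarith
  -- combine and divide by σ
  have key : (cnt (s/Nb) : ℝ)
      ≤ (2*(K:ℝ)+2) * ((1/(M:ℝ)) * ∑ m ∈ Finset.Icc 1 M, (cnt ((m:ℝ)*σ/M) : ℝ) + (N:ℝ)) := by
    have chain : σ * (cnt (s/Nb) : ℝ)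
        ≤ σ * ((2*(K:ℝ)+2) * ((1/(M:ℝ)) * ∑ m ∈ Finset.Icc 1 M, (cnt ((m:ℝ)*σ/M) : ℝ) + (N:ℝ))) := by
      have h1 := le_trans step1 step2
      have h2 : (2*(K:ℝ)+2) * ∑ p ∈ P, tent (x p.1 - x p.2)
          ≤ (2*(K:ℝ)+2) * ((σ/M) * ∑ m ∈ Finset.Icc 1 M, (cnt ((m:ℝ)*σ/M) : ℝ) + (N:ℝ)*σ) := by
        apply mul_le_mul_of_nonneg_left step3 (by positivity)
      have e : (2*(K:ℝ)+2) * ((σ/M) * ∑ m ∈ Finset.Icc 1 M, (cnt ((m:ℝ)*σ/M) : ℝ) + (N:ℝ)*σ)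
          = σ * ((2*(K:ℝ)+2) * ((1/(M:ℝ)) * ∑ m ∈ Finset.Icc 1 M, (cnt ((m:ℝ)*σ/M) : ℝ) + (N:ℝ))) := by
        field_simp
      linarith
    exact le_of_mul_le_mul_left chain hσpos
  -- convert to pairCorr
  have harg : ∀ m : ℕ, (m:ℝ)*σ/M = ((m:ℝ)*s/((K:ℝ)*M))/Nb := by
    intro m
    rw [hσdef]
    field_simp
    try ring
    try tauto
  have hpc : ∀ m : ℕ, pairCorr x β N ((m:ℝ)*s/((K:ℝ)*M))
      = (N:ℝ)^(β-2:ℝ) * (cnt ((m:ℝ)*σ/M) : ℝ) := by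
    intro m
    rw [pairCorr, hcnt, harg m, hP, hNb]
  have hpc0 : pairCorr x β N s = (N:ℝ)^(β-2:ℝ) * (cnt (s/Nb) : ℝ) := by
    rw [pairCorr, hcnt, hP, hNb]
  have hrpow : (N:ℝ)^(β-2:ℝ) * (N:ℝ) = (N:ℝ)^(β-1:ℝ) := by
    nth_rewrite 2 [← Real.rpow_one (N:ℝ)]
    rw [← Real.rpow_add hNpos]
    norm_num
    try rw [show β - 2 + 1 = β - 1 by ring]
  rw [hpc0]
  calc (N:ℝ)^(β-2:ℝ) * (cnt (s/Nb) : ℝ)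
      ≤ (N:ℝ)^(β-2:ℝ) * ((2*(K:ℝ)+2) * ((1/(M:ℝ)) * ∑ m ∈ Finset.Icc 1 M, (cnt ((m:ℝ)*σ/M) : ℝ) + (N:ℝ))) := by
        apply mul_le_mul_of_nonneg_left key (by positivity)
    _ = (2*(K:ℝ)+2) * ((1/(M:ℝ)) * ∑ m ∈ Finset.Icc 1 M,
          (N:ℝ)^(β-2:ℝ) * (cnt ((m:ℝ)*σ/M) : ℝ) + (N:ℝ)^(β-2:ℝ)*(N:ℝ)) := by
        rw [← Finset.mul_sum]
        ring
    _ = (2*(K:ℝ)+2) * ((1/(M:ℝ)) * ∑ m ∈ Finset.Icc 1 M,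
          pairCorr x β N ((m:ℝ)*s/((K:ℝ)*M)) + (N:ℝ)^(β-1:ℝ)) := by
        rw [hrpow]
        congr 3
        exact Finset.sum_congr rfl (fun m _ => (hpc m).symm)
end master


lemma pairCorr_nonneg (x : ℕ → ℝ) (β : ℝ) (N : ℕ) (s : ℝ) : 0 ≤ pairCorr x β N s := by
  unfold pairCorr
  positivity

lemma gauss_sum_real (K : ℕ) : (∑ m ∈ Finset.Icc 1 K, (m:ℝ)) = K*(K+1)/2 := by
  induction K with
  | zero => simp
  | succ n ih =>
    rw [Finset.sum_Icc_succ_top (by omega)]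
    rw [ih]
    push_cast
    ring

theorem stmt9 (x : ℕ → ℝ) (β s₀ d : ℝ) (f : ℝ → ℝ)
    (hx : ∀ n, x n ∈ Set.Icc (0:ℝ) 1)
    (hβ0 : 0 ≤ β) (hβ1 : β < 1) (hs₀ : 0 < s₀)
    (hconv : ∀ s, 0 ≤ s → s < s₀ →
      Tendsto (fun N => pairCorr x β N s) atTop (nhds (f s)))
    (hf0 : f 0 = 0)
    (hdiff : DifferentiableOn ℝ f (Set.Ico 0 s₀))
    (hderiv : HasDerivWithinAt f d (Set.Ici 0) 0) :
    ∀ s, 0 ≤ s → atTop.limsup (fun N => pairCorr x β N s) ≤ d * s := by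
  -- the local linear upper bound from the derivative
  have hfle : ∀ γ : ℝ, 0 < γ → ∃ ρ : ℝ, 0 < ρ ∧ ρ ≤ s₀ ∧
      ∀ u, 0 ≤ u → u < ρ → f u ≤ (d + γ) * u := by
    intro γ hγ
    have hlo := (hasDerivWithinAt_iff_isLittleO.mp hderiv).def hγ
    rw [eventually_nhdsWithin_iff] at hlo
    rw [Metric.eventually_nhds_iff] at hlo
    obtain ⟨ρ₁, hρ₁, hball⟩ := hlo
    refine ⟨min ρ₁ s₀, lt_min hρ₁ hs₀, min_le_right _ _, ?_⟩
    intro u hu hu'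
    have h1 : dist u 0 < ρ₁ := by
      rw [Real.dist_eq, sub_zero, abs_of_nonneg hu]
      exact lt_of_lt_of_le hu' (min_le_left _ _)
    have h2 := hball h1 (Set.mem_Ici.mpr hu)
    simp only [hf0, sub_zero, smul_eq_mul, Real.norm_eq_abs] at h2
    have h3 : |f u - u * d| ≤ γ * |u| := h2
    rw [abs_of_nonneg hu] at h3
    have := abs_le.mp h3
    nlinarith [this.2]
  -- nonnegativity of f on [0, s₀)
  have hfnn : ∀ u, 0 ≤ u → u < s₀ → 0 ≤ f u := by
    intro u hu hu'
    exact ge_of_tendsto (hconv u hu hu')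
      (Eventually.of_forall (fun N => pairCorr_nonneg x β N u))
  -- d is nonnegative
  have hd0 : 0 ≤ d := by
    by_contra hneg
    push_neg at hneg
    obtain ⟨ρ, hρ, hρs, hub⟩ := hfle (-d/2) (by linarith)
    set u := min (ρ/2) (s₀/2) with hu
    have hu0 : 0 < u := by
      apply lt_min <;> linarith
    have hus : u < s₀ := lt_of_le_of_lt (min_le_right _ _) (by linarith)
    have huρ : u < ρ := lt_of_le_of_lt (min_le_left _ _) (by linarith)
    have h1 := hub u hu0.le huρ
    have h2 := hfnn u hu0.le hus
    nlinarith
  intro s hs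
  rcases eq_or_lt_of_le hs with hs0 | hs0
  · rw [← hs0, mul_zero]
    have h0 := (hconv 0 le_rfl hs₀).limsup_eq
    rw [h0, hf0]
  · -- main case s > 0
    apply le_of_forall_pos_le_add
    intro ε hε
    set γ : ℝ := ε/(2*s) with hγdef
    have hγ : 0 < γ := by positivity
    obtain ⟨ρ, hρ, hρs, hub⟩ := hfle γ hγ
    obtain ⟨K, hKbig⟩ := exists_nat_gt (max (max (s/ρ) (4*s)) (max (6*(d+γ)*s/ε) 1))
    have hK1 : (1:ℝ) < K := lt_of_le_of_lt (le_trans (le_max_right _ _) (le_max_right _ _)) hKbig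
    have hK1' : 1 ≤ K := by exact_mod_cast hK1.le
    have hKpos : (0:ℝ) < K := by linarith
    have hKρ : s/K < ρ := by
      have h := lt_of_le_of_lt (le_trans (le_max_left _ _) (le_max_left _ _)) hKbig
      rw [div_lt_iff₀ hρ] at h
      rw [div_lt_iff₀ hKpos]
      nlinarith
    have hK4 : s/K ≤ 1/4 := by
      have h := lt_of_le_of_lt (le_trans (le_max_right _ _) (le_max_left _ _)) hKbig
      rw [div_le_div_iff₀ hKpos (by norm_num)]
      nlinarith
    have hKε : 6*(d+γ)*s < ε*K := by
      have h := lt_of_le_of_lt (le_trans (le_max_left _ _) (le_max_right _ _)) hKbig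
      rw [div_lt_iff₀ hε] at h
      nlinarith
    -- the limit of the majorant
    set A : ℝ := (2*(K:ℝ)+2) *
      ((1/(K:ℝ)) * ∑ m ∈ Finset.Icc 1 K, f ((m:ℝ)*s/((K:ℝ)*K)) + 0) with hA
    have hram : ∀ m ∈ Finset.Icc 1 K, (0:ℝ) ≤ (m:ℝ)*s/((K:ℝ)*K) ∧
        (m:ℝ)*s/((K:ℝ)*K) < ρ := by
      intro m hm
      rw [Finset.mem_Icc] at hm
      have hm1 : (1:ℝ) ≤ m := by exact_mod_cast hm.1
      have hmK : (m:ℝ) ≤ K := by exact_mod_cast hm.2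
      constructor
      · positivity
      · calc (m:ℝ)*s/((K:ℝ)*K) ≤ (K:ℝ)*s/((K:ℝ)*K) := by gcongr
          _ = s/K := by field_simp
          _ < ρ := hKρ
    have htend : Tendsto (fun N => (2*(K:ℝ)+2) *
        ((1/(K:ℝ)) * ∑ m ∈ Finset.Icc 1 K, pairCorr x β N ((m:ℝ)*s/((K:ℝ)*K))
          + (N:ℝ)^(β-1:ℝ))) atTop (nhds A) := by
      rw [hA]
      apply Tendsto.const_mul
      apply Tendsto.add
      · apply Tendsto.const_mul
        apply tendsto_finset_sum
        intro m hm
        obtain ⟨h1, h2⟩ := hram m hm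
        exact hconv _ h1 (lt_of_lt_of_le h2 hρs)
      · have h1 : Tendsto (fun y:ℝ => y^(-(1-β):ℝ)) atTop (nhds 0) :=
          tendsto_rpow_neg_atTop (by linarith)
        have := h1.comp (tendsto_natCast_atTop_atTop (R := ℝ))
        simpa [Function.comp_def, show -(1-β) = β-1 by ring] using this
    have hle : ∀ᶠ N in atTop, pairCorr x β N s ≤ (2*(K:ℝ)+2) *
        ((1/(K:ℝ)) * ∑ m ∈ Finset.Icc 1 K, pairCorr x β N ((m:ℝ)*s/((K:ℝ)*K))
          + (N:ℝ)^(β-1:ℝ)) := by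
      rw [eventually_atTop]
      exact ⟨1, fun N hN => master x β hβ0 N K K s hN hK1' hK1' hs0 hK4⟩
    have hlimsup : atTop.limsup (fun N => pairCorr x β N s) ≤ A := by
      rw [← htend.limsup_eq]
      refine limsup_le_limsup hle ?_ ?_
      · exact isCoboundedUnder_le_of_eventually_le atTop (x := 0)
          (Eventually.of_forall (fun N => pairCorr_nonneg x β N s))
      · exact htend.isBoundedUnder_le
    refine le_trans hlimsup ?_
    -- now bound A
    have hsumf : ∑ m ∈ Finset.Icc 1 K, f ((m:ℝ)*s/((K:ℝ)*K))
        ≤ (d+γ)*s/((K:ℝ)*K) * ((K:ℝ)*(K+1)/2) := by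
      calc ∑ m ∈ Finset.Icc 1 K, f ((m:ℝ)*s/((K:ℝ)*K))
          ≤ ∑ m ∈ Finset.Icc 1 K, (d+γ) * ((m:ℝ)*s/((K:ℝ)*K)) := by
            apply Finset.sum_le_sum
            intro m hm
            obtain ⟨h1, h2⟩ := hram m hm
            exact hub _ h1 h2
        _ = (d+γ)*s/((K:ℝ)*K) * (∑ m ∈ Finset.Icc 1 K, (m:ℝ)) := by
            rw [Finset.mul_sum]
            apply Finset.sum_congr rfl
            intro m _
            ring
        _ = (d+γ)*s/((K:ℝ)*K) * ((K:ℝ)*(K+1)/2) := by rw [gauss_sum_real]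
    have hγs : γ * s = ε/2 := by
      rw [hγdef]; field_simp
    have hAle : A ≤ d*s + ε := by
      rw [hA, add_zero]
      have hstep : (2*(K:ℝ)+2) * ((1/(K:ℝ)) * ∑ m ∈ Finset.Icc 1 K, f ((m:ℝ)*s/((K:ℝ)*K)))
          ≤ (2*(K:ℝ)+2) * ((1/(K:ℝ)) * ((d+γ)*s/((K:ℝ)*K) * ((K:ℝ)*(K+1)/2))) := by
        apply mul_le_mul_of_nonneg_left _ (by positivity)
        apply mul_le_mul_of_nonneg_left hsumf (by positivity)
      refine le_trans hstep ?_
      have he : (2*(K:ℝ)+2) * ((1/(K:ℝ)) * ((d+γ)*s/((K:ℝ)*K) * ((K:ℝ)*(K+1)/2)))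
          = (d+γ)*s*((K:ℝ)+1)^2/(K:ℝ)^2 := by
        field_simp
      rw [he]
      rw [div_le_iff₀ (by positivity)]
      nlinarith [hγs, hd0, hs0, hKε, hKpos, sq_nonneg ((K:ℝ)-1)]
    exact hAle
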